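/- Let A be a real n×n matrix that is Metzler (all off-diagonal entries are nonnegative) and Hurwitz (every complex eigenvalue of A has strictly negative real part). Then there exists a diagonal real n×n matrix D with strictly positive diagonal entries such that A D + D Aᵀ is negative definite. -/

import Mathlib

open Matrix Filter

attribute [local instance] Matrix.linftyOpNormedRing Matrix.linftyOpNormedAlgebra
  Matrix.linftyOpNormedSpace

private abbrev Mat (n : ℕ) := Matrix (Fin n) (Fin n) ℝ

variable {n : ℕ}

private noncomputable def entryLM (i j : Fin n) : Mat n →ₗ[ℝ] ℝ where
  toFun M := M i j
  map_add' _ _ := rfl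
  map_smul' _ _ := rfl

private lemma entry_continuous (i j : Fin n) : Continuous (fun M : Mat n => M i j) :=
  (entryLM i j).continuous_of_finiteDimensional

private lemma tsum_entry_nonneg {f : ℕ → Mat n} (h : ∀ k i j, 0 ≤ f k i j) (i j : Fin n) :
    0 ≤ (∑' k, f k) i j := by
  by_cases hs : Summable f
  · have h1 : Tendsto (fun N : Finset ℕ => (∑ k ∈ N, f k) i j) atTop
        (nhds ((∑' k, f k) i j)) := ((entry_continuous i j).tendsto _).comp hs.hasSum
    refine ge_of_tendsto h1 (Filter.Eventually.of_forall fun N => ?_)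
    rw [Matrix.sum_apply]
    exact Finset.sum_nonneg fun k _ => h k i j
  · rw [tsum_eq_zero_of_not_summable hs]
    simp

private lemma mul_entry_nonneg {M N : Mat n} (hM : ∀ i j, 0 ≤ M i j) (hN : ∀ i j, 0 ≤ N i j) :
    ∀ i j, 0 ≤ (M * N) i j := fun i j => by
  rw [Matrix.mul_apply]
  exact Finset.sum_nonneg fun k _ => mul_nonneg (hM i k) (hN k j)

private lemma pow_entry_nonneg {M : Mat n} (hM : ∀ i j, 0 ≤ M i j) :
    ∀ k i j, 0 ≤ (M ^ k) i j := by
  intro k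
  induction k with
  | zero =>
    intro i j
    simp only [pow_zero, Matrix.one_apply]
    split <;> norm_num
  | succ m ih => rw [pow_succ]; exact mul_entry_nonneg ih hM

private lemma step_lemma {x : Mat n} (hx : IsUnit x) (hpos : ∀ i j, 0 ≤ Ring.inverse x i j)
    {ε : ℝ} (hε : 0 ≤ ε) (hlt : ε * ‖Ring.inverse x‖ < 1) :
    IsUnit (x - ε • (1 : Mat n)) ∧ ∀ i j, 0 ≤ Ring.inverse (x - ε • (1 : Mat n)) i j := by
  set u : Mat n := Ring.inverse x with hu
  have hux : x * u = 1 := Ring.mul_inverse_cancel x hx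
  have hnorm : ‖ε • u‖ < 1 := by
    rw [norm_smul, Real.norm_eq_abs, abs_of_nonneg hε]; exact hlt
  set w : (Mat n)ˣ := Units.oneSub (ε • u) hnorm with hw
  have hfac : x - ε • (1 : Mat n) = x * (1 - ε • u) := by
    rw [mul_sub, mul_smul_comm, hux, mul_one]
  have hval : ((hx.unit * w : (Mat n)ˣ) : Mat n) = x - ε • (1 : Mat n) := by
    rw [Units.val_mul, hx.unit_spec, hw, Units.val_oneSub, hfac]
  have hinv : Ring.inverse (x - ε • (1 : Mat n)) = (∑' k : ℕ, (ε • u) ^ k) * u := by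
    rw [← hval, Ring.inverse_unit, _root_.mul_inv_rev, Units.val_mul]
    congr 1
    rw [hu]
    conv_rhs => rw [← hx.unit_spec]
    exact (Ring.inverse_unit hx.unit).symm
  constructor
  · exact ⟨hx.unit * w, hval⟩
  · intro i j
    rw [hinv]
    have hεu : ∀ i j, 0 ≤ (ε • u) i j := fun i j => by
      rw [Matrix.smul_apply, smul_eq_mul]; exact mul_nonneg hε (hpos i j)
    exact mul_entry_nonneg (fun i j => tsum_entry_nonneg (pow_entry_nonneg hεu) i j) hpos i j

private lemma neumann_lemma {c : ℝ} (hc : 0 < c) {M : Mat n}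
    (hM : ∀ i j, 0 ≤ M i j) (h : ‖M‖ < c) :
    IsUnit (c • (1 : Mat n) - M) ∧ ∀ i j, 0 ≤ Ring.inverse (c • (1 : Mat n) - M) i j := by
  have hnorm : ‖c⁻¹ • M‖ < 1 := by
    rw [norm_smul, Real.norm_eq_abs, abs_of_nonneg (inv_nonneg.mpr hc.le)]
    have := mul_lt_mul_of_pos_left h (inv_pos.mpr hc)
    rwa [inv_mul_cancel₀ hc.ne'] at this
  set w : (Mat n)ˣ := Units.oneSub (c⁻¹ • M) hnorm with hw
  have hfac : c • (1 : Mat n) - M = c • (w : Mat n) := by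
    rw [hw, Units.val_oneSub, smul_sub, smul_smul, mul_inv_cancel₀ hc.ne', one_smul]
  set uc : (Mat n)ˣ := ⟨c • (w : Mat n), c⁻¹ • ((w⁻¹ : (Mat n)ˣ) : Mat n),
    by rw [smul_mul_smul_comm, mul_inv_cancel₀ hc.ne', Units.mul_inv, one_smul],
    by rw [smul_mul_smul_comm, inv_mul_cancel₀ hc.ne', Units.inv_mul, one_smul]⟩ with huc
  have hval : (uc : Mat n) = c • (1 : Mat n) - M := hfac.symm
  have hinv : Ring.inverse (c • (1 : Mat n) - M)
      = c⁻¹ • ∑' k : ℕ, (c⁻¹ • M) ^ k := by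
    rw [← hval, Ring.inverse_unit]
    rfl
  refine ⟨⟨uc, hval⟩, fun i j => ?_⟩
  rw [hinv, Matrix.smul_apply, smul_eq_mul]
  have hcM : ∀ i j, 0 ≤ (c⁻¹ • M) i j := fun i j => by
    rw [Matrix.smul_apply, smul_eq_mul]
    exact mul_nonneg (inv_nonneg.mpr hc.le) (hM i j)
  exact mul_nonneg (inv_nonneg.mpr hc.le)
    (tsum_entry_nonneg (pow_entry_nonneg hcM) i j)

private lemma exists_pos_mulVec_neg (A : Mat n)
    (hMetzler : ∀ i j, i ≠ j → 0 ≤ A i j)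
    (hHurwitz : ∀ μ ∈ spectrum ℂ (A.map Complex.ofReal), μ.re < 0) :
    ∃ ξ : Fin n → ℝ, (∀ i, 0 < ξ i) ∧ ∀ i, A.mulVec ξ i < 0 := by
  classical
  set s : ℝ := 1 + ∑ i, |A i i| with hs
  have hsum_nonneg : (0:ℝ) ≤ ∑ i, |A i i| := Finset.sum_nonneg fun i _ => abs_nonneg _
  have hs1 : (1:ℝ) ≤ s := le_add_of_nonneg_right hsum_nonneg
  set B : Mat n := A + s • (1 : Mat n) with hB
  have hBnn : ∀ i j, 0 ≤ B i j := by
    intro i j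
    by_cases hij : i = j
    · subst hij
      have h1 : |A i i| ≤ ∑ k, |A k k| :=
        Finset.single_le_sum (f := fun k => |A k k|) (fun k _ => abs_nonneg _)
          (Finset.mem_univ i)
      have : B i i = A i i + s := by simp [hB, Matrix.add_apply, Matrix.one_apply]
      rw [this]
      have := neg_abs_le (A i i)
      simp only [hs]
      linarith
    · have : B i j = A i j := by simp [hB, Matrix.add_apply, Matrix.one_apply, hij]
      rw [this]; exact hMetzler i j hij
  have hrw : ∀ t : ℝ, t • (1 : Mat n) - B = (t - s) • (1 : Mat n) - A := by
    intro t
    ext i j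
    simp [hB, Matrix.sub_apply, Matrix.add_apply, Matrix.smul_apply, Matrix.one_apply,
      smul_eq_mul]
    ring_nf
    by_cases hij : i = j <;> simp [hij] <;> ring
  have hunit : ∀ t : ℝ, s ≤ t → IsUnit (t • (1 : Mat n) - B) := by
    intro t ht
    rw [hrw t, Matrix.isUnit_iff_isUnit_det, isUnit_iff_ne_zero]
    intro hdet
    have hmapdet : (((t - s) • (1 : Mat n) - A).map Complex.ofReal).det = 0 := by
      have h := (RingHom.map_det Complex.ofRealHom ((t - s) • (1 : Mat n) - A)).symm
      rw [RingHom.mapMatrix_apply] at h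
      rw [show ⇑Complex.ofRealHom = Complex.ofReal from rfl] at h
      rw [h, hdet]
      exact Complex.ofReal_zero
    have hmm : ((t - s) • (1 : Mat n) - A).map Complex.ofReal
        = ((t - s : ℝ) : ℂ) • (1 : Matrix (Fin n) (Fin n) ℂ) - A.map Complex.ofReal := by
      ext i j
      simp [Matrix.map_apply, Matrix.sub_apply, Matrix.smul_apply, Matrix.one_apply,
        smul_eq_mul, apply_ite Complex.ofReal]
    have hspec : ((t - s : ℝ) : ℂ) ∈ spectrum ℂ (A.map Complex.ofReal) := by
      rw [spectrum.mem_iff, Algebra.algebraMap_eq_smul_one]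
      rw [Matrix.isUnit_iff_isUnit_det, isUnit_iff_ne_zero, ne_eq, not_not, ← hmm]
      exact hmapdet
    have := hHurwitz _ hspec
    rw [Complex.ofReal_re] at this
    linarith
  -- the ray argument
  set K : ℝ := s + ‖B‖ with hK
  have hnormB : (0:ℝ) ≤ ‖B‖ := norm_nonneg _
  have hsK : s ≤ K := le_add_of_nonneg_right hnormB
  have hK0 : 0 < K := by linarith
  have hBK : ‖B‖ < K := by simp only [hK]; linarith
  set R : ℝ → Mat n := fun t => Ring.inverse (t • (1 : Mat n) - B) with hR
  set T : Set ℝ := {t | t ∈ Set.Icc s K ∧ ∀ i j, 0 ≤ R t i j} with hT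
  have hKT : K ∈ T := by
    refine ⟨⟨hsK, le_refl _⟩, ?_⟩
    exact (neumann_lemma hK0 hBnn hBK).2
  have hmapcont : Continuous (fun t : ℝ => t • (1 : Mat n) - B) := by
    exact (continuous_id.smul continuous_const).sub continuous_const
  have hcont : ContinuousOn R (Set.Icc s K) := by
    intro t ht
    have hAt : ContinuousAt Ring.inverse ((hunit t ht.1).unit : Mat n) :=
      NormedRing.inverse_continuousAt (hunit t ht.1).unit
    rw [(hunit t ht.1).unit_spec] at hAt
    have hca : ContinuousAt (fun t : ℝ => Ring.inverse (t • (1 : Mat n) - B)) t :=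
      ContinuousAt.comp (g := Ring.inverse) (f := fun t : ℝ => t • (1 : Mat n) - B)
        hAt hmapcont.continuousAt
    exact hca.continuousWithinAt
  have hC : IsClosed {M : Mat n | ∀ i j, 0 ≤ M i j} := by
    have : {M : Mat n | ∀ i j, 0 ≤ M i j}
        = ⋂ i, ⋂ j, (fun M : Mat n => M i j) ⁻¹' Set.Ici 0 := by
      ext M; simp [Set.mem_iInter, Set.mem_preimage]
    rw [this]
    exact isClosed_iInter fun i => isClosed_iInter fun j =>
      isClosed_Ici.preimage (entry_continuous i j)
  have hTclosed : IsClosed T := by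
    have : T = Set.Icc s K ∩ R ⁻¹' {M : Mat n | ∀ i j, 0 ≤ M i j} := rfl
    rw [this]
    exact hcont.preimage_isClosed_of_isClosed isClosed_Icc hC
  have hbdd : BddBelow T := ⟨s, fun t ht => ht.1.1⟩
  have hcmem : sInf T ∈ T := hTclosed.csInf_mem ⟨K, hKT⟩ hbdd
  set c : ℝ := sInf T with hc
  have hcs : s ≤ c := hcmem.1.1
  have hceq : c = s := by
    by_contra hne
    have hlt : s < c := lt_of_le_of_ne hcs (Ne.symm hne)
    set u : Mat n := R c with hu
    set ε : ℝ := min (c - s) (1 / (‖u‖ + 1)) with hε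
    have hu1 : (0:ℝ) < ‖u‖ + 1 := by positivity
    have hε0 : 0 < ε := lt_min (by linarith) (by positivity)
    have hεcs : ε ≤ c - s := min_le_left _ _
    have hεn : ε * ‖u‖ < 1 := by
      have h1 : ε ≤ 1 / (‖u‖ + 1) := min_le_right _ _
      have h2 : ε * ‖u‖ ≤ (1 / (‖u‖ + 1)) * ‖u‖ :=
        mul_le_mul_of_nonneg_right h1 (norm_nonneg _)
      have h3 : (1 / (‖u‖ + 1)) * ‖u‖ < 1 := by
        rw [div_mul_eq_mul_div, one_mul, div_lt_one hu1]
        linarith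
      linarith
    have hstep := step_lemma (hunit c hcs) hcmem.2 hε0.le hεn
    have hre : c • (1 : Mat n) - B - ε • (1 : Mat n) = (c - ε) • (1 : Mat n) - B := by
      rw [sub_smul]; abel
    rw [hre] at hstep
    have hmemT : (c - ε) ∈ T := by
      refine ⟨⟨by linarith, ?_⟩, hstep.2⟩
      have : c ≤ K := hcmem.1.2
      linarith
    have := csInf_le hbdd hmemT
    linarith
  have hsmem : s ∈ T := by rw [← hceq]; exact hcmem
  have hsB : s • (1 : Mat n) - B = -A := by
    rw [hrw s]; simp
  have hNnn : ∀ i j, 0 ≤ Ring.inverse (-A) i j := by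
    have := hsmem.2
    simp only [hR] at this
    rwa [hsB] at this
  have huA : IsUnit (-A : Mat n) := by
    have := hunit s (le_refl s); rwa [hsB] at this
  set N : Mat n := Ring.inverse (-A) with hN
  have h1 : N * (-A) = 1 := Ring.inverse_mul_cancel _ huA
  have h2 : (-A) * N = 1 := Ring.mul_inverse_cancel _ huA
  refine ⟨fun i => ∑ j, N i j, ?_, ?_⟩
  · intro i
    have hnonneg2 : (0:ℝ) ≤ ∑ j, N i j := Finset.sum_nonneg fun j _ => hNnn i j
    rcases hnonneg2.lt_or_eq with h | h
    · exact h
    · exfalso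
      have hzero : ∀ j, N i j = 0 := by
        intro j
        exact (Finset.sum_eq_zero_iff_of_nonneg
          (fun j _ => hNnn i j)).mp h.symm j (Finset.mem_univ j)
      have : (N * (-A)) i i = 0 := by
        rw [Matrix.mul_apply]
        exact Finset.sum_eq_zero fun k _ => by rw [hzero k, zero_mul]
      rw [h1, Matrix.one_apply_eq] at this
      exact one_ne_zero this
  · intro i
    have hAN : A * N = -1 := by
      have : -((-A) * N) = -(1 : Mat n) := by rw [h2]
      rwa [neg_mul, neg_neg] at this
    have : A.mulVec (fun i => ∑ j, N i j) i = ∑ k, (A * N) i k := by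
      rw [Matrix.mulVec]
      simp only [dotProduct, Matrix.mul_apply]
      rw [Finset.sum_comm]
      congr 1
      ext j
      rw [Finset.mul_sum]
    rw [this, hAN]
    simp [Matrix.neg_apply, Matrix.one_apply]

private lemma quad_neg (S : Mat n) (hsym : ∀ i j, S i j = S j i)
    (hoff : ∀ i j, i ≠ j → 0 ≤ S i j) (η : Fin n → ℝ) (hη : ∀ i, 0 < η i)
    (hrow : ∀ i, ∑ j, S i j * η j < 0) (x : Fin n → ℝ) (hx : x ≠ 0) :
    ∑ i, ∑ j, S i j * x i * x j < 0 := by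
  classical
  set w : Fin n → ℝ := fun i => |x i| / η i with hw
  have hxw : ∀ i, |x i| = η i * w i := fun i => by
    simp only [hw]
    rw [mul_comm, div_mul_eq_mul_div, mul_div_assoc, div_self (hη i).ne', mul_one]
  have hwnn : ∀ i, 0 ≤ w i := fun i => div_nonneg (abs_nonneg _) (hη i).le
  set St : Fin n → Fin n → ℝ := fun i j => S i j * η i * η j with hSt
  have hsymt : ∀ i j, St i j = St j i := fun i j => by
    simp only [hSt]; rw [hsym]; ring
  have hofft : ∀ i j, i ≠ j → 0 ≤ St i j := fun i j hij =>
    mul_nonneg (mul_nonneg (hoff i j hij) (hη i).le) (hη j).le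
  have hrt : ∀ i, ∑ j, St i j < 0 := by
    intro i
    have : ∑ j, St i j = η i * ∑ j, S i j * η j := by
      rw [Finset.mul_sum]
      exact Finset.sum_congr rfl fun j _ => by simp only [hSt]; ring
    rw [this]
    exact mul_neg_of_pos_of_neg (hη i) (hrow i)
  have habs : ∑ i, ∑ j, S i j * x i * x j ≤ ∑ i, ∑ j, St i j * w i * w j := by
    refine Finset.sum_le_sum fun i _ => Finset.sum_le_sum fun j _ => ?_
    have hrhs : St i j * w i * w j = S i j * |x i| * |x j| := by
      rw [hxw i, hxw j]; simp only [hSt]; ring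
    rw [hrhs]
    by_cases hij : i = j
    · subst hij
      rw [mul_assoc, mul_assoc, abs_mul_abs_self]
    · rw [mul_assoc, mul_assoc]
      refine mul_le_mul_of_nonneg_left ?_ (hoff i j hij)
      calc x i * x j ≤ |x i * x j| := le_abs_self _
        _ = |x i| * |x j| := abs_mul _ _
  have hswap : ∑ i, ∑ j, St i j * w j ^ 2 = ∑ i, ∑ j, St i j * w i ^ 2 := by
    rw [Finset.sum_comm]
    exact Finset.sum_congr rfl fun i _ => Finset.sum_congr rfl fun j _ => by
      rw [hsymt]
  have hkey : ∑ i, ∑ j, St i j * (w i - w j) ^ 2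
      = 2 * (∑ i, (∑ j, St i j) * w i ^ 2) - 2 * ∑ i, ∑ j, St i j * w i * w j := by
    have inner : ∀ i, ∑ j, St i j * (w i - w j) ^ 2
        = (∑ j, St i j * w i ^ 2) + (∑ j, St i j * w j ^ 2)
          - ∑ j, 2 * (St i j * w i * w j) := by
      intro i
      rw [← Finset.sum_add_distrib, ← Finset.sum_sub_distrib]
      exact Finset.sum_congr rfl fun j _ => by ring
    rw [Finset.sum_congr rfl fun i _ => inner i, Finset.sum_sub_distrib,
      Finset.sum_add_distrib, hswap]
    have hRR : ∑ i, ∑ j, 2 * (St i j * w i * w j)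
        = 2 * ∑ i, ∑ j, St i j * w i * w j := by
      rw [Finset.mul_sum]
      exact Finset.sum_congr rfl fun i _ => by rw [Finset.mul_sum]
    have hP : ∑ i, ∑ j, St i j * w i ^ 2 = ∑ i, (∑ j, St i j) * w i ^ 2 :=
      Finset.sum_congr rfl fun i _ => (Finset.sum_mul _ _ _).symm
    rw [hRR, hP]; ring
  have hnonneg : 0 ≤ ∑ i, ∑ j, St i j * (w i - w j) ^ 2 := by
    refine Finset.sum_nonneg fun i _ => Finset.sum_nonneg fun j _ => ?_
    by_cases hij : i = j
    · subst hij; simp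
    · exact mul_nonneg (hofft i j hij) (sq_nonneg _)
  obtain ⟨i0, hi0⟩ : ∃ i, x i ≠ 0 := by
    by_contra hcon
    push_neg at hcon
    exact hx (funext hcon)
  have hwi0 : 0 < w i0 := div_pos (abs_pos.mpr hi0) (hη i0)
  have hsum_neg : ∑ i, (∑ j, St i j) * w i ^ 2 < 0 := by
    have h1 : ∀ i ∈ Finset.univ, (∑ j, St i j) * w i ^ 2 ≤ (fun _ => (0:ℝ)) i :=
      fun i _ => mul_nonpos_of_nonpos_of_nonneg (hrt i).le (sq_nonneg _)
    have h2 : ∃ i ∈ Finset.univ, (∑ j, St i j) * w i ^ 2 < (fun _ => (0:ℝ)) i :=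
      ⟨i0, Finset.mem_univ _, mul_neg_of_neg_of_pos (hrt i0) (by positivity)⟩
    have := Finset.sum_lt_sum h1 h2
    simpa using this
  have hQ : ∑ i, ∑ j, St i j * w i * w j ≤ ∑ i, (∑ j, St i j) * w i ^ 2 := by
    nlinarith [hkey, hnonneg]
  linarith

/-- A Metzler (nonnegative off-diagonal entries) Hurwitz matrix admits a
diagonal Lyapunov solution: there is a diagonal `D` with strictly positive
diagonal entries such that `A D + D Aᵀ` is negative definite. -/
theorem metzler_hurwitz_diagonal_lyapunov
    {n : ℕ} (A : Matrix (Fin n) (Fin n) ℝ)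
    (hMetzler : ∀ i j, i ≠ j → 0 ≤ A i j)
    (hHurwitz : ∀ μ ∈ spectrum ℂ (A.map (Complex.ofReal)), μ.re < 0) :
    ∃ d : Fin n → ℝ, (∀ i, 0 < d i) ∧
      (-(A * diagonal d + diagonal d * Aᵀ)).PosDef := by
  classical
  -- Hurwitz for the transpose
  have hHurwitzT : ∀ μ ∈ spectrum ℂ (Aᵀ.map Complex.ofReal), μ.re < 0 := by
    intro μ hμ
    apply hHurwitz
    rw [spectrum.mem_iff] at hμ ⊢
    intro hcon
    apply hμ
    have htr : algebraMap ℂ (Matrix (Fin n) (Fin n) ℂ) μ - Aᵀ.map Complex.ofReal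
        = (algebraMap ℂ (Matrix (Fin n) (Fin n) ℂ) μ - A.map Complex.ofReal)ᵀ := by
      ext i j
      simp only [Matrix.sub_apply, Matrix.transpose_apply, Matrix.map_apply,
        Algebra.algebraMap_eq_smul_one, Matrix.smul_apply, Matrix.one_apply, smul_eq_mul]
      by_cases hij : i = j
      · subst hij; simp
      · simp [hij, Ne.symm hij]
    rw [htr, Matrix.isUnit_iff_isUnit_det, Matrix.det_transpose,
      ← Matrix.isUnit_iff_isUnit_det]
    exact hcon
  have hMetzlerT : ∀ i j, i ≠ j → 0 ≤ Aᵀ i j := fun i j hij =>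
    hMetzler j i (Ne.symm hij)
  obtain ⟨ξ, hξpos, hξneg⟩ := exists_pos_mulVec_neg A hMetzler hHurwitz
  obtain ⟨η, hηpos, hηneg⟩ := exists_pos_mulVec_neg Aᵀ hMetzlerT hHurwitzT
  set d : Fin n → ℝ := fun i => ξ i / η i with hd
  have hdpos : ∀ i, 0 < d i := fun i => div_pos (hξpos i) (hηpos i)
  have hdη : ∀ i, d i * η i = ξ i := fun i => div_mul_cancel₀ _ (hηpos i).ne'
  refine ⟨d, hdpos, ?_⟩
  set Mm : Matrix (Fin n) (Fin n) ℝ := A * diagonal d + diagonal d * Aᵀ with hMm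
  have hent : ∀ i j, Mm i j = A i j * d j + d i * A j i := by
    intro i j
    simp [hMm, Matrix.add_apply, Matrix.mul_diagonal, Matrix.diagonal_mul,
      Matrix.transpose_apply]
  have hsym : ∀ i j, Mm i j = Mm j i := by
    intro i j; rw [hent, hent]; ring
  have hoff : ∀ i j, i ≠ j → 0 ≤ Mm i j := by
    intro i j hij
    rw [hent]
    exact add_nonneg (mul_nonneg (hMetzler i j hij) (hdpos j).le)
      (mul_nonneg (hdpos i).le (hMetzler j i (Ne.symm hij)))
  have hrow : ∀ i, ∑ j, Mm i j * η j < 0 := by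
    intro i
    have hcalc : ∑ j, Mm i j * η j
        = A.mulVec ξ i + d i * Aᵀ.mulVec η i := by
      rw [Matrix.mulVec, Matrix.mulVec, dotProduct, dotProduct,
        Finset.mul_sum, ← Finset.sum_add_distrib]
      refine Finset.sum_congr rfl fun j _ => ?_
      rw [hent, ← hdη j, Matrix.transpose_apply]
      ring
    rw [hcalc]
    have h1 := hξneg i
    have h2 := mul_neg_of_pos_of_neg (hdpos i) (hηneg i)
    linarith
  refine Matrix.PosDef.of_dotProduct_mulVec_pos ?_ ?_
  · -- Hermitian
    ext i j
    simp only [Matrix.conjTranspose_apply, Matrix.neg_apply, star_trivial]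
    rw [hent, hent]
    ring
  · intro x hx
    have hq := quad_neg Mm hsym hoff η hηpos hrow x hx
    have hdot : star x ⬝ᵥ (-Mm) *ᵥ x = -∑ i, ∑ j, Mm i j * x i * x j := by
      rw [dotProduct]
      rw [show star x = x from rfl]
      rw [← Finset.sum_neg_distrib]
      refine Finset.sum_congr rfl fun i _ => ?_
      rw [Matrix.mulVec, dotProduct, Finset.mul_sum, ← Finset.sum_neg_distrib]
      refine Finset.sum_congr rfl fun j _ => ?_
      rw [Matrix.neg_apply]
      ring
    rw [hdot]
    linarith
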